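/- For 1 ≤ k < l ≤ n, the number of binary strings of length n with no two adjacent 1's, with σ_k = 1 and σ_l = 1, equals F_k · F_{l-k-1} · F_{n-l+1}. -/

import Mathlib

namespace FibCount

def NA {m : ℕ} (σ : Fin m → Bool) : Prop :=
  ∀ i j : Fin m, (j : ℕ) = (i : ℕ) + 1 → ¬(σ i = true ∧ σ j = true)

lemma na_iff {m : ℕ} (σ : Fin m → Bool) :
    NA σ ↔ ∀ i : ℕ, ∀ h : i + 1 < m, ¬(σ ⟨i, by omega⟩ = true ∧ σ ⟨i + 1, h⟩ = true) := by
  constructor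
  · intro H i h
    exact H ⟨i, by omega⟩ ⟨i + 1, h⟩ rfl
  · rintro H ⟨i, hi⟩ ⟨j, hj⟩ hji
    simp only at hji
    subst hji
    exact H i hj

/-- all strings with no adjacent ones -/
def A (m : ℕ) := {σ : Fin m → Bool // NA σ}
/-- first entry false -/
def Bf (m : ℕ) := {σ : Fin m → Bool // NA σ ∧ ∀ h : 0 < m, σ ⟨0, h⟩ = false}
/-- first entry true -/
def Bt (m : ℕ) := {σ : Fin m → Bool // NA σ ∧ ∀ h : 0 < m, σ ⟨0, h⟩ = true}
/-- last entry false -/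
def Bl (m : ℕ) := {σ : Fin m → Bool // NA σ ∧ ∀ h : 0 < m, σ ⟨m - 1, by omega⟩ = false}
/-- first and last entries false -/
def C (m : ℕ) := {σ : Fin m → Bool //
    NA σ ∧ (∀ h : 0 < m, σ ⟨0, h⟩ = false) ∧ ∀ h : 0 < m, σ ⟨m - 1, by omega⟩ = false}

instance (m : ℕ) : Finite (A m) := Subtype.finite
instance (m : ℕ) : Finite (Bf m) := Subtype.finite
instance (m : ℕ) : Finite (Bt m) := Subtype.finite
instance (m : ℕ) : Finite (Bl m) := Subtype.finite
instance (m : ℕ) : Finite (C m) := Subtype.finite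

lemma na_tail {m : ℕ} {σ : Fin (m + 1) → Bool} (h : NA σ) :
    NA (fun i : Fin m => σ i.succ) := by
  rw [na_iff] at h ⊢
  intro i hi H
  refine h (i + 1) (by omega) ?_
  simpa [Fin.succ, Fin.ext_iff] using H

lemma na_cons {m : ℕ} (b : Bool) {σ : Fin m → Bool} (h : NA σ)
    (hb : ∀ h0 : 0 < m, ¬(b = true ∧ σ ⟨0, h0⟩ = true)) :
    NA (Fin.cons b σ : Fin (m + 1) → Bool) := by
  rw [na_iff] at h ⊢
  intro i hi H
  match i with
  | 0 =>
    refine hb (by omega) ?_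
    have h1 : (⟨0, by omega⟩ : Fin (m + 1)) = (0 : Fin (m+1)) := rfl
    have h2 : (⟨1, hi⟩ : Fin (m + 1)) = Fin.succ ⟨0, by omega⟩ := by
      simp [Fin.ext_iff]
    rw [h1, h2, Fin.cons_zero, Fin.cons_succ] at H
    exact H
  | (j + 1) =>
    refine h j (by omega) ?_
    have h1 : (⟨j + 1, by omega⟩ : Fin (m + 1)) = Fin.succ ⟨j, by omega⟩ := by
      simp [Fin.ext_iff]
    have h2 : (⟨j + 1 + 1, hi⟩ : Fin (m + 1)) = Fin.succ ⟨j + 1, by omega⟩ := by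
      simp [Fin.ext_iff]
    rw [h1, h2, Fin.cons_succ, Fin.cons_succ] at H
    exact H

lemma cons_tail_eq {m : ℕ} (σ : Fin (m + 1) → Bool) :
    (Fin.cons (σ 0) (fun i : Fin m => σ i.succ) : Fin (m + 1) → Bool) = σ := by
  funext i
  cases i using Fin.cases with
  | zero => simp
  | succ j => simp

/-- prepend false: Bf (m+1) ≃ A m -/
def eBfA (m : ℕ) : Bf (m + 1) ≃ A m where
  toFun σ := ⟨fun i => σ.1 i.succ, na_tail σ.2.1⟩
  invFun σ := ⟨Fin.cons false σ.1, na_cons false σ.2 (by simp), by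
    intro h; rfl⟩
  left_inv σ := by
    apply Subtype.ext
    have h0 : σ.1 0 = false := σ.2.2 (by omega)
    conv_rhs => rw [← cons_tail_eq σ.1]
    rw [h0]
  right_inv σ := by
    apply Subtype.ext
    funext i
    simp

/-- Bt (m+1) ≃ Bf m -/
def eBtBf (m : ℕ) : Bt (m + 1) ≃ Bf m where
  toFun σ := ⟨fun i => σ.1 i.succ, na_tail σ.2.1, by
    intro h0
    have h1 := σ.2.1 ⟨0, by omega⟩ ⟨1, by omega⟩ rfl
    have h2 := σ.2.2 (by omega)
    have : σ.1 ⟨1, by omega⟩ = false := by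
      by_contra hc
      exact h1 ⟨h2, by simpa using hc⟩
    simpa [Fin.succ] using this⟩
  invFun σ := ⟨Fin.cons true σ.1, na_cons true σ.2.1 (by
      intro h0 H
      have := σ.2.2 h0
      rw [this] at H
      exact absurd H.2 (by simp)), by intro h; rfl⟩
  left_inv σ := by
    apply Subtype.ext
    have h0 : σ.1 0 = true := σ.2.2 (by omega)
    conv_rhs => rw [← cons_tail_eq σ.1]
    rw [h0]
  right_inv σ := by
    apply Subtype.ext
    funext i
    simp

/-- split on first bit -/
def eASplit (m : ℕ) : A (m + 1) ≃ Bf (m + 1) ⊕ Bt (m + 1) where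
  toFun σ :=
    if h : σ.1 0 = false then Sum.inl ⟨σ.1, σ.2, fun _ => h⟩
    else Sum.inr ⟨σ.1, σ.2, fun _ => by simpa using h⟩
  invFun x := match x with
    | Sum.inl σ => ⟨σ.1, σ.2.1⟩
    | Sum.inr σ => ⟨σ.1, σ.2.1⟩
  left_inv σ := by
    by_cases h : σ.1 0 = false <;> simp [h] <;> rfl
  right_inv x := by
    match x with
    | Sum.inl σ =>
      have : σ.1 0 = false := σ.2.2 (by omega)
      simp [this]; rfl
    | Sum.inr σ =>
      have : σ.1 0 = true := σ.2.2 (by omega)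
      simp [this]; rfl

lemma na_rev {m : ℕ} {σ : Fin m → Bool} (h : NA σ) : NA (σ ∘ Fin.rev) := by
  rw [na_iff] at h ⊢
  intro i hi H
  refine h (m - i - 2) (by omega) ?_
  have e1 : Fin.rev (⟨i, by omega⟩ : Fin m) = ⟨m - i - 1, by omega⟩ := by
    simp [Fin.rev, Fin.ext_iff]; omega
  have e2 : Fin.rev (⟨i + 1, hi⟩ : Fin m) = ⟨m - i - 2, by omega⟩ := by
    simp [Fin.rev, Fin.ext_iff]; omega
  simp only [Function.comp_apply] at H
  rw [e1, e2] at H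
  have e3 : (⟨m - i - 2 + 1, by omega⟩ : Fin m) = ⟨m - i - 1, by omega⟩ := by
    simp [Fin.ext_iff]; omega
  rw [e3]
  exact ⟨H.2, H.1⟩

/-- reversal : Bl m ≃ Bf m -/
def eBlBf (m : ℕ) : Bl m ≃ Bf m where
  toFun σ := ⟨σ.1 ∘ Fin.rev, na_rev σ.2.1, by
    intro h0
    have e : Fin.rev (⟨0, h0⟩ : Fin m) = ⟨m - 1, by omega⟩ := by
      simp [Fin.rev, Fin.ext_iff]
    simp only [Function.comp_apply, e]
    exact σ.2.2 h0⟩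
  invFun σ := ⟨σ.1 ∘ Fin.rev, na_rev σ.2.1, by
    intro h0
    have e : Fin.rev (⟨m - 1, by omega⟩ : Fin m) = ⟨0, h0⟩ := by
      simp [Fin.rev, Fin.ext_iff]; omega
    simp only [Function.comp_apply, e]
    exact σ.2.2 h0⟩
  left_inv σ := by
    apply Subtype.ext
    funext i
    simp [Fin.rev_rev]
  right_inv σ := by
    apply Subtype.ext
    funext i
    simp [Fin.rev_rev]

/-- C (m+1) ≃ Bl m -/
def eCBl (m : ℕ) : C (m + 1) ≃ Bl m where
  toFun σ := ⟨fun i => σ.1 i.succ, na_tail σ.2.1, by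
    intro h0
    have := σ.2.2.2 (by omega)
    have e : (Fin.succ ⟨m - 1, by omega⟩ : Fin (m + 1)) = ⟨m + 1 - 1, by omega⟩ := by
      simp [Fin.ext_iff]; omega
    show σ.1 (Fin.succ ⟨m - 1, by omega⟩) = false
    rw [e]
    exact this⟩
  invFun σ := ⟨Fin.cons false σ.1, na_cons false σ.2.1 (by simp),
    (fun _ => rfl), by
      intro h0
      rcases Nat.eq_zero_or_pos m with hm | hm
      · subst hm; rfl
      · have e : (⟨m + 1 - 1, by omega⟩ : Fin (m + 1)) = Fin.succ ⟨m - 1, by omega⟩ := by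
          simp [Fin.ext_iff]; omega
        rw [e, Fin.cons_succ]
        exact σ.2.2 hm⟩
  left_inv σ := by
    apply Subtype.ext
    have h0 : σ.1 0 = false := σ.2.2.1 (by omega)
    conv_rhs => rw [← cons_tail_eq σ.1]
    rw [h0]
  right_inv σ := by
    apply Subtype.ext
    funext i
    simp

lemma cardA_cardBf : ∀ m : ℕ,
    Nat.card (A m) = Nat.fib (m + 2) ∧ Nat.card (Bf m) = Nat.fib (m + 1) := by
  intro m
  induction m with
  | zero =>
    have h1 : Nat.card (A 0) = 1 := by
      rw [Nat.card_eq_one_iff_unique]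
      exact ⟨⟨fun a b => Subtype.ext (funext fun i => i.elim0)⟩,
        ⟨⟨fun i => false, by rintro ⟨i, hi⟩; omega⟩⟩⟩
    have h2 : Nat.card (Bf 0) = 1 := by
      rw [Nat.card_eq_one_iff_unique]
      exact ⟨⟨fun a b => Subtype.ext (funext fun i => i.elim0)⟩,
        ⟨⟨fun i => false, ⟨by rintro ⟨i, hi⟩; omega, by intro h; omega⟩⟩⟩⟩
    rw [h1, h2]
    constructor <;> norm_num
  | succ m ih =>
    have hbf : Nat.card (Bf (m + 1)) = Nat.fib (m + 2) := by
      rw [Nat.card_congr (eBfA m)]; exact ih.1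
    refine ⟨?_, hbf⟩
    rw [Nat.card_congr (eASplit m), Nat.card_sum, hbf,
      Nat.card_congr (eBtBf m), ih.2]
    conv_rhs => rw [Nat.fib_add_two]
    exact Nat.add_comm _ _

lemma cardA (m : ℕ) : Nat.card (A m) = Nat.fib (m + 2) := (cardA_cardBf m).1
lemma cardBf (m : ℕ) : Nat.card (Bf m) = Nat.fib (m + 1) := (cardA_cardBf m).2
lemma cardBl (m : ℕ) : Nat.card (Bl m) = Nat.fib (m + 1) := by
  rw [Nat.card_congr (eBlBf m)]; exact cardBf m
lemma cardC (m : ℕ) (hm : 1 ≤ m) : Nat.card (C m) = Nat.fib m := by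
  cases m with
  | zero => omega
  | succ m' => rw [Nat.card_congr (eCBl m'), cardBl]

lemma na_nat {m : ℕ} {σ : Fin m → Bool} (h : NA σ) {a b : ℕ} (ha : a < m) (hb : b < m)
    (hab : b = a + 1) : ¬(σ ⟨a, ha⟩ = true ∧ σ ⟨b, hb⟩ = true) :=
  h ⟨a, ha⟩ ⟨b, hb⟩ hab

lemma na_false_left {m : ℕ} {σ : Fin m → Bool} (h : NA σ) {a b : ℕ} (ha : a < m) (hb : b < m)
    (hab : b = a + 1) (ht : σ ⟨b, hb⟩ = true) : σ ⟨a, ha⟩ = false := by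
  cases hx : σ ⟨a, ha⟩ with
  | false => rfl
  | true => exact absurd ⟨hx, ht⟩ (na_nat h ha hb hab)

lemma na_false_right {m : ℕ} {σ : Fin m → Bool} (h : NA σ) {a b : ℕ} (ha : a < m) (hb : b < m)
    (hab : b = a + 1) (ht : σ ⟨a, ha⟩ = true) : σ ⟨b, hb⟩ = false := by
  cases hx : σ ⟨b, hb⟩ with
  | false => rfl
  | true => exact absurd ⟨ht, hx⟩ (na_nat h ha hb hab)

lemma apply_val_eq {m : ℕ} (σ : Fin m → Bool) {a b : ℕ} {ha : a < m} {hb : b < m} (h : a = b) :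
    σ ⟨a, ha⟩ = σ ⟨b, hb⟩ := by subst h; rfl

def glue (n k l : ℕ) (σ₁ : Fin (k - 1) → Bool) (σ₂ : Fin (l - k - 1) → Bool)
    (σ₃ : Fin (n - l) → Bool) : Fin n → Bool := fun i =>
  if h1 : (i : ℕ) < k - 1 then σ₁ ⟨i, h1⟩
  else if (i : ℕ) = k - 1 then true
  else if h3 : k ≤ (i : ℕ) ∧ (i : ℕ) < l - 1 then σ₂ ⟨(i : ℕ) - k, by omega⟩
  else if (i : ℕ) = l - 1 then true
  else if h5 : l ≤ (i : ℕ) then σ₃ ⟨(i : ℕ) - l, by have := i.isLt; omega⟩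
  else false

section GlueLemmas

variable {n k l : ℕ} {σ₁ : Fin (k - 1) → Bool} {σ₂ : Fin (l - k - 1) → Bool}
  {σ₃ : Fin (n - l) → Bool}

lemma glue_lt {i : ℕ} (hi : i < n) (h : i < k - 1) :
    glue n k l σ₁ σ₂ σ₃ ⟨i, hi⟩ = σ₁ ⟨i, h⟩ := by
  simp only [glue]
  split_ifs <;> first | rfl | omega

lemma glue_k {i : ℕ} (hi : i < n) (h : i = k - 1) :
    glue n k l σ₁ σ₂ σ₃ ⟨i, hi⟩ = true := by
  simp only [glue]
  split_ifs <;> first | rfl | omega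

lemma glue_mid (hk : 1 ≤ k) {i : ℕ} (hi : i < n) (h1 : k ≤ i) (h2 : i < l - 1) :
    glue n k l σ₁ σ₂ σ₃ ⟨i, hi⟩ = σ₂ ⟨i - k, by omega⟩ := by
  simp only [glue]
  split_ifs <;> first | rfl | omega

lemma glue_l (hk : 1 ≤ k) (hkl2 : k + 2 ≤ l) {i : ℕ} (hi : i < n) (h : i = l - 1) :
    glue n k l σ₁ σ₂ σ₃ ⟨i, hi⟩ = true := by
  simp only [glue]
  split_ifs <;> first | rfl | omega

lemma glue_hi (hk : 1 ≤ k) (hkl2 : k + 2 ≤ l) {i : ℕ} (hi : i < n) (h : l ≤ i) :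
    glue n k l σ₁ σ₂ σ₃ ⟨i, hi⟩ = σ₃ ⟨i - l, by omega⟩ := by
  simp only [glue]
  split_ifs <;> first | rfl | omega

end GlueLemmas

def mainEquiv (n k l : ℕ) (hk : 1 ≤ k) (hkl2 : k + 2 ≤ l) (hln : l ≤ n) :
    {σ : Fin n → Bool // NA σ ∧ σ ⟨k - 1, by omega⟩ = true ∧ σ ⟨l - 1, by omega⟩ = true} ≃
      Bl (k - 1) × C (l - k - 1) × Bf (n - l) where
  toFun σ :=
    (⟨fun i => σ.1 ⟨(i : ℕ), by have := i.isLt; omega⟩, by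
        rintro ⟨a, ha⟩ ⟨b, hb⟩ hab
        exact na_nat σ.2.1 (by omega) (by omega) (by simpa using hab), by
        intro h0
        show σ.1 ⟨k - 1 - 1, by omega⟩ = false
        exact na_false_left σ.2.1 (by omega) (by omega) (by omega) σ.2.2.1⟩,
     ⟨fun i => σ.1 ⟨k + (i : ℕ), by have := i.isLt; omega⟩, by
        rintro ⟨a, ha⟩ ⟨b, hb⟩ hab
        exact na_nat σ.2.1 (by omega) (by omega) (by simp at hab ⊢; omega), ⟨by
        intro h0
        show σ.1 ⟨k + 0, by omega⟩ = false
        exact na_false_right σ.2.1 (by omega) (by omega) (by omega) σ.2.2.1, by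
        intro h0
        show σ.1 ⟨k + (l - k - 1 - 1), by omega⟩ = false
        exact na_false_left σ.2.1 (by omega) (by omega) (by omega) σ.2.2.2⟩⟩,
     ⟨fun i => σ.1 ⟨l + (i : ℕ), by have := i.isLt; omega⟩, by
        rintro ⟨a, ha⟩ ⟨b, hb⟩ hab
        exact na_nat σ.2.1 (by omega) (by omega) (by simp at hab ⊢; omega), by
        intro h0
        show σ.1 ⟨l + 0, by omega⟩ = false
        exact na_false_right σ.2.1 (by omega) (by omega) (by omega) σ.2.2.2⟩)
  invFun t := ⟨glue n k l t.1.1 t.2.1.1 t.2.2.1, by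
    obtain ⟨⟨σ₁, hna1, h1l⟩, ⟨σ₂, hna2, h2f, h2l⟩, ⟨σ₃, hna3, h3f⟩⟩ := t
    have h1l' : ∀ a : ℕ, ∀ ha : a < k - 1, a + 1 = k - 1 → σ₁ ⟨a, ha⟩ = false := by
      intro a ha h
      have e : a = k - 1 - 1 := by omega
      subst e
      exact h1l (by omega)
    have h2f' : ∀ a : ℕ, ∀ ha : a < l - k - 1, a = 0 → σ₂ ⟨a, ha⟩ = false := by
      intro a ha h
      subst h
      exact h2f (by omega)
    have h2l' : ∀ a : ℕ, ∀ ha : a < l - k - 1, a + 1 = l - k - 1 → σ₂ ⟨a, ha⟩ = false := by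
      intro a ha h
      have e : a = l - k - 1 - 1 := by omega
      subst e
      exact h2l (by omega)
    have h3f' : ∀ a : ℕ, ∀ ha : a < n - l, a = 0 → σ₃ ⟨a, ha⟩ = false := by
      intro a ha h
      subst h
      exact h3f (by omega)
    refine ⟨?_, glue_k (by omega) rfl, glue_l hk hkl2 (by omega) rfl⟩
    rw [na_iff]
    intro i hi H
    obtain ⟨H1, H2⟩ := H
    by_cases c1 : i + 1 < k - 1
    · rw [glue_lt _ (by omega)] at H1
      rw [glue_lt _ c1] at H2
      exact na_nat hna1 (by omega) c1 rfl ⟨H1, H2⟩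
    by_cases c2 : i + 1 = k - 1
    · rw [glue_lt _ (by omega)] at H1
      exact Bool.noConfusion ((h1l' i (by omega) (by omega)).symm.trans H1)
    by_cases c3 : i = k - 1
    · rw [glue_mid hk _ (by omega) (by omega)] at H2
      exact Bool.noConfusion ((h2f' (i + 1 - k) (by omega) (by omega)).symm.trans H2)
    by_cases c4 : i + 1 < l - 1
    · rw [glue_mid hk _ (by omega) (by omega)] at H1
      rw [glue_mid hk _ (by omega) c4] at H2
      exact na_nat hna2 (by omega) (by omega) (by omega) ⟨H1, H2⟩
    by_cases c5 : i + 1 = l - 1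
    · rw [glue_mid hk _ (by omega) (by omega)] at H1
      exact Bool.noConfusion ((h2l' (i - k) (by omega) (by omega)).symm.trans H1)
    by_cases c6 : i = l - 1
    · rw [glue_hi hk hkl2 _ (by omega)] at H2
      exact Bool.noConfusion ((h3f' (i + 1 - l) (by omega) (by omega)).symm.trans H2)
    · rw [glue_hi hk hkl2 _ (by omega)] at H1
      rw [glue_hi hk hkl2 _ (by omega)] at H2
      exact na_nat hna3 (by omega) (by omega) (by omega) ⟨H1, H2⟩⟩
  left_inv σ := by
    apply Subtype.ext
    show glue n k l _ _ _ = σ.1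
    funext i
    rcases i with ⟨i, hi⟩
    by_cases c1 : i < k - 1
    · rw [glue_lt hi c1]
    by_cases c2 : i = k - 1
    · subst c2
      rw [glue_k hi rfl]
      exact σ.2.2.1.symm
    by_cases c3 : i < l - 1
    · rw [glue_mid hk hi (by omega) c3]
      show σ.1 ⟨k + (i - k), by omega⟩ = σ.1 ⟨i, hi⟩
      exact apply_val_eq σ.1 (by omega)
    by_cases c4 : i = l - 1
    · subst c4
      rw [glue_l hk hkl2 hi rfl]
      exact σ.2.2.2.symm
    · rw [glue_hi hk hkl2 hi (by omega)]
      show σ.1 ⟨l + (i - l), by omega⟩ = σ.1 ⟨i, hi⟩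
      exact apply_val_eq σ.1 (by omega)
  right_inv t := by
    obtain ⟨⟨σ₁, p1⟩, ⟨σ₂, p2⟩, ⟨σ₃, p3⟩⟩ := t
    refine Prod.ext ?_ (Prod.ext ?_ ?_)
    · apply Subtype.ext
      show (fun i : Fin (k - 1) => glue n k l σ₁ σ₂ σ₃ ⟨(i : ℕ), by have := i.isLt; omega⟩) = σ₁
      funext i
      rw [glue_lt _ i.isLt]
    · apply Subtype.ext
      show (fun i : Fin (l - k - 1) =>
        glue n k l σ₁ σ₂ σ₃ ⟨k + (i : ℕ), by have := i.isLt; omega⟩) = σ₂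
      funext i
      rw [glue_mid hk _ (by omega) (by have := i.isLt; omega)]
      exact apply_val_eq σ₂ (by omega)
    · apply Subtype.ext
      show (fun i : Fin (n - l) =>
        glue n k l σ₁ σ₂ σ₃ ⟨l + (i : ℕ), by have := i.isLt; omega⟩) = σ₃
      funext i
      rw [glue_hi hk hkl2 _ (by omega)]
      exact apply_val_eq σ₃ (by omega)

end FibCount


theorem fib_count_11 (n k l : ℕ) (hk : 1 ≤ k) (hkl : k < l) (hln : l ≤ n) :
    Nat.card {σ : Fin n → Bool //
      (∀ i j : Fin n, (j : ℕ) = (i : ℕ) + 1 → ¬(σ i = true ∧ σ j = true)) ∧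
      σ ⟨k - 1, by omega⟩ = true ∧ σ ⟨l - 1, by omega⟩ = true} =
    Nat.fib k * Nat.fib (l - k - 1) * Nat.fib (n - l + 1) := by
  by_cases hcase : l = k + 1
  · haveI : IsEmpty {σ : Fin n → Bool //
        (∀ i j : Fin n, (j : ℕ) = (i : ℕ) + 1 → ¬(σ i = true ∧ σ j = true)) ∧
        σ ⟨k - 1, by omega⟩ = true ∧ σ ⟨l - 1, by omega⟩ = true} := by
      constructor
      rintro ⟨σ, hna, h1, h2⟩
      exact hna ⟨k - 1, by omega⟩ ⟨l - 1, by omega⟩ (by simp; omega) ⟨h1, h2⟩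
    rw [Nat.card_of_isEmpty, show l - k - 1 = 0 by omega]
    simp
  · have hkl2 : k + 2 ≤ l := by omega
    refine (Nat.card_congr (FibCount.mainEquiv n k l hk hkl2 hln)).trans ?_
    rw [Nat.card_prod, Nat.card_prod, FibCount.cardBl, FibCount.cardC _ (by omega),
      FibCount.cardBf, show k - 1 + 1 = k by omega]
    ring
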